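/- Let X be a set, Y a nonempty subset of X, and S(Y) a subsemigroup of T(Y). If S(Y) is a subgroup of Sym(Y) and X \ Y is finite, then T_{S(Y)}(X) is a unit-regular semigroup. -/
import Mathlib


open Set Function

/-- `S` is a subsemigroup of the full transformation semigroup on `A`
(closed under composition; composition order is irrelevant here since we
quantify over all ordered pairs). -/
def IsSubsemigroupOn {A : Type*} (S : Set (A → A)) : Prop :=
  ∀ a ∈ S, ∀ b ∈ S, a ∘ b ∈ S

/-- `S` is a subgroup of `Sym(A)`. -/
def IsSubgroupOfSym {A : Type*} (S : Set (A → A)) : Prop :=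
  IsSubsemigroupOn S ∧ (∀ a ∈ S, Function.Bijective a) ∧ (id ∈ S) ∧
    ∀ a ∈ S, ∃ b ∈ S, a ∘ b = id ∧ b ∘ a = id

/-- `S` is a regular semigroup of transformations: every `a ∈ S` has `b ∈ S`
with `aba = a` (composed left to right, i.e. `x ↦ a (b (a x))`). -/
def IsRegularOn {A : Type*} (S : Set (A → A)) : Prop :=
  ∀ a ∈ S, ∃ b ∈ S, a ∘ b ∘ a = a

/-- `S` is an inverse semigroup of transformations. -/
def IsInverseOn {A : Type*} (S : Set (A → A)) : Prop :=
  ∀ a ∈ S, ∃! b, b ∈ S ∧ a ∘ b ∘ a = a ∧ b ∘ a ∘ b = b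

/-- `u` is a unit of the transformation monoid `S`. -/
def IsUnitOn {A : Type*} (S : Set (A → A)) (u : A → A) : Prop :=
  u ∈ S ∧ ∃ v ∈ S, u ∘ v = id ∧ v ∘ u = id

/-- `a` is a unit-regular element of `S`. -/
def UnitRegularElem {A : Type*} (S : Set (A → A)) (a : A → A) : Prop :=
  ∃ u, IsUnitOn S u ∧ a ∘ u ∘ a = a

/-- `S` is a unit-regular transformation monoid. -/
def IsUnitRegularOn {A : Type*} (S : Set (A → A)) : Prop :=
  ∀ a ∈ S, UnitRegularElem S a

/-- `T` is a transversal of `ker f`: it contains exactly one element of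
each kernel class. -/
def IsTransversalOf {A : Type*} (f : A → A) (T : Set A) : Prop :=
  ∀ x : A, ∃! t, t ∈ T ∧ f t = f x

/-- `T'` is a transversal of the kernel of the restriction of `f` to `Y`,
viewed inside the ambient set. -/
def IsTransversalOfOn {A : Type*} (f : A → A) (Y T' : Set A) : Prop :=
  T' ⊆ Y ∧ ∀ y ∈ Y, ∃! t, t ∈ T' ∧ f t = f y

/-- The semigroup `T_{S(Y)}(X)` of all transformations of `X` that leave `Y`
invariant and whose restriction-corestriction to `Y` lies in `S`. -/
def TSemi {X : Type*} (Y : Set X) (S : Set (Y → Y)) : Set (X → X) :=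
  {f | ∃ h : MapsTo f Y Y, MapsTo.restrict f Y Y h ∈ S}



lemma extend_perm {α : Type*} [Finite α] (s : Set α) (p : s → α) (hp : Injective p) :
    ∃ σ : Equiv.Perm α, ∀ z : s, σ z = p z := by
  classical
  cases nonempty_fintype α
  have hcard : Fintype.card ↥sᶜ = Fintype.card ↥(range p)ᶜ := by
    have h1 : Fintype.card s = Fintype.card (range p) :=
      Fintype.card_congr (Equiv.ofInjective p hp)
    have h2 := Fintype.card_compl_set s
    have h3 := Fintype.card_compl_set (range p)
    have h4 : Fintype.card s ≤ Fintype.card α := Fintype.card_le_of_injective _ Subtype.val_injective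
    have h5 : Fintype.card (range p) ≤ Fintype.card α := Fintype.card_le_of_injective _ Subtype.val_injective
    omega
  let q : ↥sᶜ ≃ ↥(range p)ᶜ := Fintype.equivOfCardEq hcard
  refine ⟨(Equiv.Set.sumCompl s).symm.trans
    ((Equiv.sumCongr (Equiv.ofInjective p hp) q).trans (Equiv.Set.sumCompl (range p))), ?_⟩
  intro z
  simp [Equiv.Set.sumCompl_symm_apply, Equiv.ofInjective]

theorem stmt6 {X : Type*} (Y : Set X) (S : Set (Y → Y)) (hY : Y.Nonempty)
    (hgrp : IsSubgroupOfSym S) (hfin : Yᶜ.Finite) :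
    IsUnitRegularOn (TSemi Y S) := by
  classical
  rintro f ⟨hf, hfS⟩
  set g : Y → Y := MapsTo.restrict f Y Y hf with hg
  obtain ⟨g', hg'S, hgg', hg'g⟩ := hgrp.2.2.2 g hfS
  have := hfin.to_subtype
  -- the set of points in Yᶜ hit by f from Yᶜ
  set Z : Set ↥Yᶜ := {z | ∃ x : ↥Yᶜ, f x = (z : X)} with hZ
  -- choose preimages
  have hchoice : ∀ z : Z, ∃ x : ↥Yᶜ, f x = ((z : ↥Yᶜ) : X) := fun z => z.2
  choose p hp using hchoice
  have hpinj : Injective p := by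
    intro a b hab
    have : ((a : ↥Yᶜ) : X) = ((b : ↥Yᶜ) : X) := by rw [← hp a, ← hp b, hab]
    exact Subtype.ext (Subtype.ext this)
  obtain ⟨σ, hσ⟩ := extend_perm Z p hpinj
  -- define u and v
  set u : X → X := fun x => if hx : x ∈ Y then (g' ⟨x, hx⟩ : X) else ((σ ⟨x, hx⟩ : ↥Yᶜ) : X) with hu
  set v : X → X := fun x => if hx : x ∈ Y then (g ⟨x, hx⟩ : X) else ((σ.symm ⟨x, hx⟩ : ↥Yᶜ) : X) with hv
  have humem : MapsTo u Y Y := by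
    intro x hx; simp only [hu, dif_pos hx]; exact (g' ⟨x, hx⟩).2
  have hvmem : MapsTo v Y Y := by
    intro x hx; simp only [hv, dif_pos hx]; exact (g ⟨x, hx⟩).2
  have hures : MapsTo.restrict u Y Y humem = g' := by
    funext y; apply Subtype.ext
    simp [MapsTo.restrict, Subtype.map, hu, dif_pos y.2]
  have hvres : MapsTo.restrict v Y Y hvmem = g := by
    funext y; apply Subtype.ext
    simp [MapsTo.restrict, Subtype.map, hv, dif_pos y.2]
  have hgg'app : ∀ w : Y, g (g' w) = w := fun w => congrFun hgg' w
  have hg'gapp : ∀ w : Y, g' (g w) = w := fun w => congrFun hg'g w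
  have hfapp : ∀ (y : X) (hy : y ∈ Y), f y = (g ⟨y, hy⟩ : X) := fun y hy => rfl
  have huv : u ∘ v = id := by
    funext x
    by_cases hx : x ∈ Y
    · simp only [comp_apply, hv, hu, dif_pos hx, id_eq, dif_pos (g ⟨x, hx⟩).2]
      have := hg'gapp ⟨x, hx⟩
      calc (g' ⟨(g ⟨x, hx⟩ : X), (g ⟨x, hx⟩).2⟩ : X) = (g' (g ⟨x, hx⟩) : X) := rfl
      _ = x := by rw [this]
    · simp only [comp_apply, hv, hu, dif_neg hx, id_eq,
        dif_neg ((σ.symm ⟨x, hx⟩ : ↥Yᶜ).2 : _)]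
      have : σ (σ.symm ⟨x, hx⟩) = ⟨x, hx⟩ := σ.apply_symm_apply _
      calc ((σ ⟨((σ.symm ⟨x, hx⟩ : ↥Yᶜ) : X), _⟩ : ↥Yᶜ) : X)
          = ((σ (σ.symm ⟨x, hx⟩) : ↥Yᶜ) : X) := rfl
      _ = x := by rw [this]
  have hvu : v ∘ u = id := by
    funext x
    by_cases hx : x ∈ Y
    · simp only [comp_apply, hu, hv, dif_pos hx, id_eq, dif_pos (g' ⟨x, hx⟩).2]
      have := hgg'app ⟨x, hx⟩
      calc (g ⟨(g' ⟨x, hx⟩ : X), (g' ⟨x, hx⟩).2⟩ : X) = (g (g' ⟨x, hx⟩) : X) := rfl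
      _ = x := by rw [this]
    · simp only [comp_apply, hu, hv, dif_neg hx, id_eq,
        dif_neg ((σ ⟨x, hx⟩ : ↥Yᶜ).2 : _)]
      have : σ.symm (σ ⟨x, hx⟩) = ⟨x, hx⟩ := σ.symm_apply_apply _
      calc ((σ.symm ⟨((σ ⟨x, hx⟩ : ↥Yᶜ) : X), _⟩ : ↥Yᶜ) : X)
          = ((σ.symm (σ ⟨x, hx⟩) : ↥Yᶜ) : X) := rfl
      _ = x := by rw [this]
  refine ⟨u, ⟨⟨humem, hures ▸ hg'S⟩, v, ⟨hvmem, hvres ▸ hfS⟩, huv, hvu⟩, ?_⟩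
  funext x
  by_cases hfx : f x ∈ Y
  · simp only [comp_apply, hu, dif_pos hfx]
    have h1 : f (g' ⟨f x, hfx⟩ : X) = (g (g' ⟨f x, hfx⟩) : X) := rfl
    rw [h1, hgg'app ⟨f x, hfx⟩]
  · have hx : x ∉ Y := fun hx => hfx (hf hx)
    have hzZ : (⟨f x, hfx⟩ : ↥Yᶜ) ∈ Z := ⟨⟨x, hx⟩, rfl⟩
    simp only [comp_apply, hu, dif_neg hfx]
    rw [hσ ⟨⟨f x, hfx⟩, hzZ⟩]
    exact hp ⟨⟨f x, hfx⟩, hzZ⟩
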